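/- arXiv:2603.00419 — 5 statements merged into one kernel-verified Lean document; each statement's English description precedes it below -/
import Mathlib

section
/- Let P̂ ∈ ℝ^{n×n} be symmetric positive definite and let P, A₂ᵀA₂ be symmetric with P - A₂ᵀA₂ positive definite. If y ∈ ℂⁿ is nonzero and λ ∈ ℂ satisfies (P̂ y*) λ² - (y*(P̂ - P)y) λ - y* A₂ᵀA₂ y = 0 (i.e., λ² - (y*(P̂-P)y)/(y*P̂y) λ - (y*A₂ᵀA₂y)/(y*P̂y) = 0), and if both 2P̂ - P - A₂ᵀA₂ and P̂ - A₂ᵀA₂ are positive definite, then |λ| < 1. -/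
open Matrix

lemma aux_decomp {n : ℕ} (M : Matrix (Fin n) (Fin n) ℝ) (hM : M.IsSymm) (y : Fin n → ℂ) :
    star y ⬝ᵥ (M.map Complex.ofReal *ᵥ y)
      = (((fun i => (y i).re) ⬝ᵥ (M *ᵥ fun i => (y i).re)
          + (fun i => (y i).im) ⬝ᵥ (M *ᵥ fun i => (y i).im) : ℝ) : ℂ) := by
  have hL : star y ⬝ᵥ (M.map Complex.ofReal *ᵥ y)
      = ∑ i, ∑ j, (starRingEnd ℂ) (y i) * ((M i j : ℂ) * y j) := by
    simp [dotProduct, mulVec, Finset.mul_sum]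
  rw [hL]
  apply Complex.ext
  · simp only [Complex.re_sum, Complex.mul_re, Complex.mul_im, Complex.conj_re,
      Complex.conj_im, Complex.ofReal_re, Complex.ofReal_im, Complex.ofReal_re]
    simp [dotProduct, mulVec, Finset.mul_sum, Finset.sum_add_distrib]
  · simp only [Complex.im_sum, Complex.mul_im, Complex.mul_re, Complex.conj_re,
      Complex.conj_im, Complex.ofReal_re, Complex.ofReal_im, Complex.ofReal_im]
    have key : (∑ i, ∑ j, (M i j * ((y i).re * (y j).im) - M i j * ((y i).im * (y j).re))) = 0 := by
      set f : Fin n → Fin n → ℝ :=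
        fun i j => M i j * ((y i).re * (y j).im) - M i j * ((y i).im * (y j).re) with hf
      have hanti : ∀ i j, f j i = - f i j := by
        intro i j
        simp only [hf, hM.apply]
        ring
      have hS : (∑ i, ∑ j, f i j) = - ∑ i, ∑ j, f i j := by
        calc (∑ i, ∑ j, f i j) = ∑ j, ∑ i, f i j := Finset.sum_comm
          _ = ∑ j, ∑ i, -(f j i) := Finset.sum_congr rfl fun j _ =>
              Finset.sum_congr rfl fun i _ => by rw [hanti j i]
          _ = - ∑ j, ∑ i, f j i := by simp
      linarith
    refine Eq.trans (Finset.sum_congr rfl fun i _ => Finset.sum_congr rfl fun j _ => ?_) key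
    ring

noncomputable def rq {n : ℕ} (y : Fin n → ℂ) (M : Matrix (Fin n) (Fin n) ℝ) : ℝ :=
  (fun i => (y i).re) ⬝ᵥ (M *ᵥ fun i => (y i).re)
    + (fun i => (y i).im) ⬝ᵥ (M *ᵥ fun i => (y i).im)

lemma rq_sub {n : ℕ} (y : Fin n → ℂ) (M N : Matrix (Fin n) (Fin n) ℝ) :
    rq y (M - N) = rq y M - rq y N := by
  simp only [rq, Matrix.sub_mulVec, dotProduct_sub]
  ring

lemma rq_two {n : ℕ} (y : Fin n → ℂ) (M : Matrix (Fin n) (Fin n) ℝ) :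
    rq y ((2 : ℕ) • M) = 2 * rq y M := by
  rw [two_smul]
  simp only [rq, Matrix.add_mulVec, dotProduct_add]
  ring

lemma rq_pos {n : ℕ} {M : Matrix (Fin n) (Fin n) ℝ} (hM : M.PosDef) {y : Fin n → ℂ}
    (hy : y ≠ 0) : 0 < rq y M := by
  have hre : ∀ x : Fin n → ℝ, 0 ≤ x ⬝ᵥ (M *ᵥ x) := fun x => by
    simpa using hM.posSemidef.dotProduct_mulVec_nonneg x
  have hpos : ∀ x : Fin n → ℝ, x ≠ 0 → 0 < x ⬝ᵥ (M *ᵥ x) := fun x hx => by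
    simpa using hM.dotProduct_mulVec_pos hx
  by_cases h : (fun i => (y i).re) = 0
  · have h2 : (fun i => (y i).im) ≠ 0 := by
      intro h2
      apply hy
      funext i
      have e1 := congrFun h i
      have e2 := congrFun h2 i
      simp only [Pi.zero_apply] at e1 e2
      exact Complex.ext e1 e2
    exact add_pos_of_nonneg_of_pos (hre _) (hpos _ h2)
  · exact add_pos_of_pos_of_nonneg (hpos _ h) (hre _)

lemma rq_nonneg {n : ℕ} {M : Matrix (Fin n) (Fin n) ℝ} (hM : M.PosSemidef) (y : Fin n → ℂ) :
    0 ≤ rq y M := by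
  have hre : ∀ x : Fin n → ℝ, 0 ≤ x ⬝ᵥ (M *ᵥ x) := fun x => by
    simpa using hM.dotProduct_mulVec_nonneg x
  exact add_nonneg (hre _) (hre _)

/-- If `P̂ ≻ 0`, `P - A₂ᵀA₂ ≻ 0`, `2P̂ - P - A₂ᵀA₂ ≻ 0` and `P̂ - A₂ᵀA₂ ≻ 0`, then any
complex root `λ` of the quadratic `(y*P̂y) λ² - (y*(P̂-P)y) λ - (y*A₂ᵀA₂y) = 0`
(for a nonzero `y ∈ ℂⁿ`) satisfies `|λ| < 1`. -/
theorem stmt_1 {n q : ℕ} (Phat P : Matrix (Fin n) (Fin n) ℝ)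
    (A₂ : Matrix (Fin q) (Fin n) ℝ)
    (hPhatSym : Phat.IsSymm) (hPSym : P.IsSymm)
    (hPhat : Phat.PosDef)
    (hPA : (P - A₂ᵀ * A₂).PosDef)
    (h1 : (2 • Phat - P - A₂ᵀ * A₂).PosDef)
    (h2 : (Phat - A₂ᵀ * A₂).PosDef)
    (y : Fin n → ℂ) (hy : y ≠ 0) (lam : ℂ)
    (hquad : (star y ⬝ᵥ ((Phat.map (Complex.ofReal)) *ᵥ y)) * lam ^ 2
        - (star y ⬝ᵥ (((Phat - P).map (Complex.ofReal)) *ᵥ y)) * lam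
        - (star y ⬝ᵥ (((A₂ᵀ * A₂).map (Complex.ofReal)) *ᵥ y)) = 0) :
    ‖lam‖ < 1 := by
  have hA2symm : (A₂ᵀ * A₂).IsSymm := by
    unfold Matrix.IsSymm
    rw [Matrix.transpose_mul, Matrix.transpose_transpose]
  have hA2psd : (A₂ᵀ * A₂).PosSemidef := by
    have := Matrix.posSemidef_conjTranspose_mul_self A₂
    rwa [Matrix.conjTranspose_eq_transpose_of_trivial] at this
  set p := rq y Phat with hp_def
  set a := rq y P with ha_def
  set t := rq y (A₂ᵀ * A₂) with ht_def
  have hp : 0 < p := rq_pos hPhat hy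
  have ht : 0 ≤ t := rq_nonneg hA2psd y
  have hat : 0 < a - t := by
    have := rq_pos hPA hy
    rwa [rq_sub] at this
  have h1' : 0 < 2 * p - a - t := by
    have := rq_pos h1 hy
    rwa [rq_sub, rq_sub, rq_two] at this
  have h2' : 0 < p - t := by
    have := rq_pos h2 hy
    rwa [rq_sub] at this
  have hq1 : star y ⬝ᵥ (Phat.map Complex.ofReal *ᵥ y) = (p : ℂ) := aux_decomp Phat hPhatSym y
  have hq2 : star y ⬝ᵥ ((Phat - P).map Complex.ofReal *ᵥ y) = ((p - a : ℝ) : ℂ) := by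
    rw [aux_decomp (Phat - P) (hPhatSym.sub hPSym) y]
    norm_cast
    exact rq_sub y Phat P
  have hq3 : star y ⬝ᵥ ((A₂ᵀ * A₂).map Complex.ofReal *ᵥ y) = (t : ℂ) :=
    aux_decomp (A₂ᵀ * A₂) hA2symm y
  rw [hq1, hq2, hq3] at hquad
  have heq : (p : ℂ) * lam ^ 2 = ((p - a : ℝ) : ℂ) * lam + (t : ℂ) := by
    linear_combination hquad
  set r := ‖lam‖ with hr_def
  have hr0 : 0 ≤ r := norm_nonneg lam
  have habs : p * r ^ 2 ≤ |p - a| * r + t := by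
    calc p * r ^ 2 = ‖(p : ℂ) * lam ^ 2‖ := by
          rw [norm_mul, norm_pow, Complex.norm_real, Real.norm_eq_abs, abs_of_pos hp]
      _ = ‖((p - a : ℝ) : ℂ) * lam + (t : ℂ)‖ := by rw [heq]
      _ ≤ ‖((p - a : ℝ) : ℂ) * lam‖ + ‖(t : ℂ)‖ :=
          norm_add_le _ _
      _ = |p - a| * r + t := by
          rw [norm_mul, Complex.norm_real, Complex.norm_real, Real.norm_eq_abs, Real.norm_eq_abs, abs_of_nonneg ht]
  have hba : |p - a| < p - t := abs_lt.mpr ⟨by linarith, by linarith⟩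
  by_contra hcon
  push_neg at hcon
  have hr1 : (0 : ℝ) < r := lt_of_lt_of_le one_pos hcon
  nlinarith [mul_lt_mul_of_pos_right hba hr1, mul_le_mul_of_nonneg_left hcon ht,
    mul_le_mul_of_nonneg_left hcon (mul_pos hp hr1).le]
end

section
/- Consider the block matrix 𝒜 = [[I, A₁, 0], [0, P, A₂ᵀ], [0, A₂, I]] with A₁ ∈ ℝ^{p×n} of full column rank, P = A₁ᵀA₁, A₂ ∈ ℝ^{q×n}, and the block diagonal preconditioner ℳ₁ = diag(I_p, P̂, I_q) with P̂ symmetric positive definite. If μ = 1 is an eigenvalue of ℳ₁⁻¹𝒜 with eigenvector (x; y; z), and P̂ ≠ P arbitrary, then A₁y = 0 forces y = 0, and the eigenvector satisfies y = 0 and A₂ᵀz = 0; consequently the geometric multiplicity of the eigenvalue 1 of ℳ₁⁻¹𝒜 equals p + q - rank(A₂). -/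
open Matrix

/-- For `𝒜 = [[I,A₁,0],[0,P,A₂ᵀ],[0,A₂,I]]` with `A₁` of full column rank, `P = A₁ᵀA₁`, and
`ℳ₁ = diag(I, P̂, I)` with `P̂ ≻ 0`: `A₁y = 0` forces `y = 0`; every eigenvector of
`ℳ₁⁻¹𝒜` for the eigenvalue `1` has middle block `0` and last block in `𝒩(A₂ᵀ)`;
and the geometric multiplicity of the eigenvalue `1` equals `p + q - rank A₂`. -/
theorem stmt_9 {p n q : ℕ} (A₁ : Matrix (Fin p) (Fin n) ℝ)
    (A₂ : Matrix (Fin q) (Fin n) ℝ) (Phat : Matrix (Fin n) (Fin n) ℝ)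
    (hA₁ : A₁.rank = n) (hPhat : Phat.PosDef)
    (𝒜 ℳ₁ : Matrix (Fin p ⊕ (Fin n ⊕ Fin q)) (Fin p ⊕ (Fin n ⊕ Fin q)) ℝ)
    (h𝒜 : 𝒜 = fromBlocks 1 (fromCols A₁ 0) 0 (fromBlocks (A₁ᵀ * A₁) A₂ᵀ A₂ 1))
    (hℳ : ℳ₁ = fromBlocks 1 0 0 (fromBlocks Phat 0 0 1)) :
    (∀ y : Fin n → ℝ, A₁ *ᵥ y = 0 → y = 0) ∧
    (∀ ν : Fin p ⊕ (Fin n ⊕ Fin q) → ℝ, (ℳ₁⁻¹ * 𝒜) *ᵥ ν = ν →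
      (∀ j, ν (Sum.inr (Sum.inl j)) = 0) ∧
        A₂ᵀ *ᵥ (fun k => ν (Sum.inr (Sum.inr k))) = 0) ∧
    Module.finrank ℝ (LinearMap.ker (ℳ₁⁻¹ * 𝒜 - 1).mulVecLin) = p + q - A₂.rank := by
  -- A₁ injective
  have hinj : ∀ y : Fin n → ℝ, A₁ *ᵥ y = 0 → y = 0 := by
    have hrn := A₁.mulVecLin.finrank_range_add_finrank_ker
    have hr : Module.finrank ℝ (LinearMap.range A₁.mulVecLin) = n := hA₁
    rw [hr, Module.finrank_fin_fun] at hrn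
    have hk : Module.finrank ℝ (LinearMap.ker A₁.mulVecLin) = 0 := by omega
    have hbot : LinearMap.ker A₁.mulVecLin = ⊥ := Submodule.finrank_eq_zero.mp hk
    intro y hy
    have : y ∈ LinearMap.ker A₁.mulVecLin := by simpa [Matrix.mulVecLin_apply] using hy
    simpa [hbot] using this
  -- ℳ₁ invertible
  have hdet : IsUnit ℳ₁.det := by
    rw [hℳ, det_fromBlocks_zero₂₁, det_one, one_mul, det_fromBlocks_zero₂₁, det_one, mul_one]
    exact isUnit_iff_ne_zero.mpr hPhat.det_pos.ne'
  have hMl : ℳ₁ * ℳ₁⁻¹ = 1 := Matrix.mul_nonsing_inv _ hdet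
  have hMr : ℳ₁⁻¹ * ℳ₁ = 1 := Matrix.nonsing_inv_mul _ hdet
  -- eigen equation characterization
  have hchar : ∀ ν : Fin p ⊕ (Fin n ⊕ Fin q) → ℝ,
      (ℳ₁⁻¹ * 𝒜) *ᵥ ν = ν ↔ 𝒜 *ᵥ ν = ℳ₁ *ᵥ ν := by
    intro ν
    constructor
    · intro h
      have := congrArg (ℳ₁ *ᵥ ·) h
      simpa [Matrix.mulVec_mulVec, ← Matrix.mul_assoc, hMl] using this
    · intro h
      have := congrArg (ℳ₁⁻¹ *ᵥ ·) h
      simpa [Matrix.mulVec_mulVec, hMr] using this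
  -- block decomposition of eigen equation
  have hblocks : ∀ ν : Fin p ⊕ (Fin n ⊕ Fin q) → ℝ,
      𝒜 *ᵥ ν = ℳ₁ *ᵥ ν ↔
      ((fun j => ν (Sum.inr (Sum.inl j))) = 0 ∧
        A₂ᵀ *ᵥ (fun k => ν (Sum.inr (Sum.inr k))) = 0) := by
    intro ν
    set x : Fin p → ℝ := fun i => ν (Sum.inl i) with hx
    set w : Fin n → ℝ := fun j => ν (Sum.inr (Sum.inl j)) with hw
    set z : Fin q → ℝ := fun k => ν (Sum.inr (Sum.inr k)) with hz
    have hν : ν = Sum.elim x (Sum.elim w z) := by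
      funext i; rcases i with i | j | k <;> rfl
    rw [hν, h𝒜, hℳ]
    rw [fromBlocks_mulVec, fromBlocks_mulVec]
    simp only [Sum.elim_comp_inl, Sum.elim_comp_inr]
    rw [fromBlocks_mulVec, fromBlocks_mulVec]
    simp only [Sum.elim_comp_inl, Sum.elim_comp_inr, fromCols_mulVec_sumElim]
    constructor
    · intro h
      have hA₁w : A₁ *ᵥ w = 0 := by
        funext i
        simpa using congrFun h (Sum.inl i)
      have hw0 : w = 0 := hinj w hA₁w
      refine ⟨hw0, ?_⟩
      funext j
      have h2 := congrFun h (Sum.inr (Sum.inl j))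
      rw [hw0] at h2
      simpa using h2
    · rintro ⟨hw0, hz0⟩
      rw [hw0, hz0]
      funext i
      rcases i with i | j | k <;> simp [Matrix.mulVec_zero]
  refine ⟨hinj, fun ν h => ?_, ?_⟩
  · have := (hblocks ν).mp ((hchar ν).mp h)
    exact ⟨fun j => congrFun this.1 j, this.2⟩
  -- finrank computation
  · have hker : ∀ ν : Fin p ⊕ (Fin n ⊕ Fin q) → ℝ,
        ν ∈ LinearMap.ker (ℳ₁⁻¹ * 𝒜 - 1).mulVecLin ↔
        ((fun j => ν (Sum.inr (Sum.inl j))) = 0 ∧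
          A₂ᵀ *ᵥ (fun k => ν (Sum.inr (Sum.inr k))) = 0) := by
      intro ν
      rw [LinearMap.mem_ker, Matrix.mulVecLin_apply, Matrix.sub_mulVec, sub_eq_zero,
        Matrix.one_mulVec]
      exact (hchar ν).trans (hblocks ν)
    let E : LinearMap.ker (ℳ₁⁻¹ * 𝒜 - 1).mulVecLin ≃ₗ[ℝ]
        (Fin p → ℝ) × LinearMap.ker A₂ᵀ.mulVecLin :=
      { toFun := fun ν => (fun i => ν.1 (Sum.inl i),
          ⟨fun k => ν.1 (Sum.inr (Sum.inr k)), by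
            rw [LinearMap.mem_ker, Matrix.mulVecLin_apply]
            exact ((hker ν.1).mp ν.2).2⟩)
        invFun := fun xz => ⟨Sum.elim xz.1 (Sum.elim 0 xz.2.1), by
          rw [hker]
          constructor
          · funext j; simp
          · have h3 := LinearMap.mem_ker.mp xz.2.2
            rw [Matrix.mulVecLin_apply] at h3
            exact h3⟩
        map_add' := by intro a b; ext <;> simp
        map_smul' := by intro c a; ext <;> simp
        left_inv := by
          rintro ⟨ν, hν⟩
          ext i
          rcases i with i | j | k
          · rfl
          · have := ((hker ν).mp hν).1
            simpa using (congrFun this j).symm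
          · rfl
        right_inv := by
          rintro ⟨x, z⟩
          ext i <;> simp }
    rw [E.finrank_eq, Module.finrank_prod, Module.finrank_fin_fun]
    have hrn := A₂ᵀ.mulVecLin.finrank_range_add_finrank_ker
    have hr : Module.finrank ℝ (LinearMap.range A₂ᵀ.mulVecLin) = A₂.rank := by
      rw [show Module.finrank ℝ (LinearMap.range A₂ᵀ.mulVecLin) = A₂ᵀ.rank from rfl,
        A₂.rank_transpose]
    rw [hr, Module.finrank_fin_fun] at hrn
    have hle : A₂.rank ≤ q := by
      simpa using A₂.rank_le_card_height
    omega
end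

section
/- Let 𝒜 = [[I, A₁, 0], [0, P, A₂ᵀ], [0, A₂, I]] and ℳ₁ = diag(I, P̂, I) with P̂ symmetric positive definite and A₁ of full column rank. If (μ, (x; y; z)) is an eigenpair of ℳ₁⁻¹𝒜 with μ ≠ 1, then y ≠ 0, x = (μ-1)⁻¹ A₁ y, z = (μ-1)⁻¹ A₂ y, and y satisfies (1-μ)(P - μP̂)y = A₂ᵀA₂ y. -/
open Matrix

/-- If `(μ, (x; y; z))` is an eigenpair of `ℳ₁⁻¹𝒜` with `μ ≠ 1`, then `y ≠ 0`,
`x = (μ-1)⁻¹ A₁y`, `z = (μ-1)⁻¹ A₂y`, and `(1-μ)(P - μP̂)y = A₂ᵀA₂ y`. -/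
theorem stmt_10 {p n q : ℕ} (A₁ : Matrix (Fin p) (Fin n) ℝ)
    (A₂ : Matrix (Fin q) (Fin n) ℝ) (Phat : Matrix (Fin n) (Fin n) ℝ)
    (hA₁ : A₁.rank = n) (hPhat : Phat.PosDef)
    (𝒜 ℳ₁ : Matrix (Fin p ⊕ (Fin n ⊕ Fin q)) (Fin p ⊕ (Fin n ⊕ Fin q)) ℝ)
    (h𝒜 : 𝒜 = fromBlocks 1 (fromCols A₁ 0) 0 (fromBlocks (A₁ᵀ * A₁) A₂ᵀ A₂ 1))
    (hℳ : ℳ₁ = fromBlocks 1 0 0 (fromBlocks Phat 0 0 1))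
    (μ : ℝ) (hμ : μ ≠ 1) (x : Fin p → ℝ) (y : Fin n → ℝ) (z : Fin q → ℝ)
    (hν : Sum.elim x (Sum.elim y z) ≠ 0)
    (heig : (ℳ₁⁻¹ * 𝒜) *ᵥ Sum.elim x (Sum.elim y z) = μ • Sum.elim x (Sum.elim y z)) :
    y ≠ 0 ∧ x = (μ - 1)⁻¹ • (A₁ *ᵥ y) ∧ z = (μ - 1)⁻¹ • (A₂ *ᵥ y) ∧
      (1 - μ) • ((A₁ᵀ * A₁ - μ • Phat) *ᵥ y) = (A₂ᵀ * A₂) *ᵥ y := by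
  have hμ1 : μ - 1 ≠ 0 := sub_ne_zero.mpr hμ
  have hdet : IsUnit ℳ₁.det := by
    rw [hℳ, det_fromBlocks_zero₂₁, det_fromBlocks_zero₂₁]
    simp [isUnit_iff_ne_zero, hPhat.det_pos.ne']
  have h2 : 𝒜 *ᵥ Sum.elim x (Sum.elim y z) = ℳ₁ *ᵥ (μ • Sum.elim x (Sum.elim y z)) := by
    rw [← heig, mulVec_mulVec, ← Matrix.mul_assoc, Matrix.mul_nonsing_inv _ hdet,
      Matrix.one_mul]
  rw [h𝒜, hℳ] at h2
  have hcomp1 : ∀ {α : Type} (a : Fin p → α) (b : Fin n ⊕ Fin q → α),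
      (Sum.elim a b) ∘ Sum.inl = a := fun _ _ => rfl
  have hcomp2 : ∀ {α : Type} (a : Fin p → α) (b : Fin n ⊕ Fin q → α),
      (Sum.elim a b) ∘ Sum.inr = b := fun _ _ => rfl
  simp only [fromBlocks_mulVec, fromCols_mulVec_sumElim, mulVec_smul, one_mulVec,
    zero_mulVec, add_zero, zero_add, Matrix.zero_mulVec, mulVec_zero, smul_add,
    hcomp1, hcomp2] at h2
  have e1 : x + A₁ *ᵥ y = μ • x := by
    funext i
    simpa using congrFun h2 (Sum.inl i)
  have e23 := fun j => congrFun h2 (Sum.inr j)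
  have e2 : (A₁ᵀ * A₁) *ᵥ y + A₂ᵀ *ᵥ z = μ • Phat *ᵥ y := by
    funext i
    have := e23 (Sum.inl i)
    simpa [fromBlocks_mulVec, mulVec_smul] using this
  have e3 : A₂ *ᵥ y + z = μ • z := by
    funext i
    have := e23 (Sum.inr i)
    simpa [fromBlocks_mulVec] using this
  have hx : x = (μ - 1)⁻¹ • (A₁ *ᵥ y) := by
    have : A₁ *ᵥ y = (μ - 1) • x := by
      funext i
      have := congrFun e1 i
      simp only [Pi.add_apply, Pi.smul_apply, smul_eq_mul] at this ⊢
      ring_nf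
      linarith
    rw [this, smul_smul, inv_mul_cancel₀ hμ1, one_smul]
  have hz : z = (μ - 1)⁻¹ • (A₂ *ᵥ y) := by
    have : A₂ *ᵥ y = (μ - 1) • z := by
      funext i
      have := congrFun e3 i
      simp only [Pi.add_apply, Pi.smul_apply, smul_eq_mul] at this ⊢
      ring_nf
      linarith
    rw [this, smul_smul, inv_mul_cancel₀ hμ1, one_smul]
  have hy : y ≠ 0 := by
    intro hy0
    apply hν
    rw [hy0, mulVec_zero, smul_zero] at hx hz
    funext i
    rcases i with i | i | i <;> simp [hx, hz, hy0]
  refine ⟨hy, hx, hz, ?_⟩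
  funext i
  have h2i := congrFun e2 i
  have hzAy : A₂ᵀ *ᵥ z = (μ - 1)⁻¹ • ((A₂ᵀ * A₂) *ᵥ y) := by
    rw [hz, mulVec_smul, mulVec_mulVec]
  rw [hzAy] at h2i
  simp only [Pi.add_apply, Pi.smul_apply, smul_eq_mul, Matrix.sub_mulVec, Matrix.smul_mulVec,
    Pi.sub_apply] at h2i ⊢
  field_simp at h2i ⊢
  ring_nf at h2i ⊢
  linarith
end

section
/- For each inexact block-splitting preconditioned matrix ℳᵢ⁻¹𝒜 (i = 1,2,3,4), which has block structure [[I_p, Ψ], [0, Φ]] with Φ of size (n+q)×(n+q), the minimal polynomial has degree at most n + q + 1; consequently GMRES applied to the preconditioned system terminates in at most n + q + 1 iterations in exact arithmetic. -/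
open Matrix Polynomial

private lemma pow_fromBlocks {p m : Type*} [Fintype p] [Fintype m] [DecidableEq p]
    [DecidableEq m]
    (A : Matrix p p ℝ) (B₀ : Matrix p m ℝ) (D : Matrix m m ℝ) (k : ℕ) :
    ∃ B, (fromBlocks A B₀ 0 D) ^ k = fromBlocks (A ^ k) B 0 (D ^ k) := by
  induction k with
  | zero => exact ⟨0, by simp [Matrix.fromBlocks_one]⟩
  | succ k ih =>
    obtain ⟨B, hB⟩ := ih
    refine ⟨A ^ k * B₀ + B * D, ?_⟩
    rw [pow_succ, hB, pow_succ, pow_succ, Matrix.fromBlocks_multiply]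
    simp

private lemma aeval_fromBlocks {p m : Type*} [Fintype p] [Fintype m] [DecidableEq p]
    [DecidableEq m]
    (A : Matrix p p ℝ) (B₀ : Matrix p m ℝ) (D : Matrix m m ℝ) (f : ℝ[X]) :
    ∃ B, aeval (fromBlocks A B₀ 0 D) f = fromBlocks (aeval A f) B 0 (aeval D f) := by
  induction f using Polynomial.induction_on' with
  | add f g hf hg =>
    obtain ⟨Bf, hBf⟩ := hf
    obtain ⟨Bg, hBg⟩ := hg
    exact ⟨Bf + Bg, by simp [map_add, hBf, hBg, Matrix.fromBlocks_add]⟩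
  | monomial k a =>
    obtain ⟨B, hB⟩ := pow_fromBlocks A B₀ D k
    refine ⟨a • B, ?_⟩
    simp [aeval_monomial, Algebra.algebraMap_eq_smul_one, smul_mul_assoc, one_mul, hB,
      Matrix.fromBlocks_smul]

private lemma my_sum_mulVec {m ι : Type*} [Fintype m] [DecidableEq ι] (s : Finset ι)
    (M : ι → Matrix m m ℝ) (c : m → ℝ) :
    (∑ i ∈ s, M i) *ᵥ c = ∑ i ∈ s, (M i) *ᵥ c := by
  induction s using Finset.induction_on with
  | empty => simp
  | insert a t h ih => simp [Finset.sum_insert h, Matrix.add_mulVec, ih]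

/-- Any preconditioned matrix `T = ℳᵢ⁻¹𝒜` with block structure `[[I_p, Ψ], [0, Φ]]`
(`Φ` of size `(n+q)×(n+q)`) has minimal polynomial of degree at most `n + q + 1`;
consequently (GMRES termination in exact arithmetic) if `T` is invertible then for
every right-hand side `c`, the solution `T⁻¹c` lies in the Krylov subspace
spanned by `c, Tc, …, T^{n+q}c`. -/
theorem stmt_14 {p n q : ℕ} (Ψ : Matrix (Fin p) (Fin n ⊕ Fin q) ℝ)
    (Φ : Matrix (Fin n ⊕ Fin q) (Fin n ⊕ Fin q) ℝ)
    (T : Matrix (Fin p ⊕ (Fin n ⊕ Fin q)) (Fin p ⊕ (Fin n ⊕ Fin q)) ℝ)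
    (hT : T = fromBlocks 1 Ψ 0 Φ) :
    (minpoly ℝ T).natDegree ≤ n + q + 1 ∧
      (IsUnit T.det → ∀ c : Fin p ⊕ (Fin n ⊕ Fin q) → ℝ,
        T⁻¹ *ᵥ c ∈ Submodule.span ℝ
          (Set.range fun k : Fin (n + q + 1) => (T ^ (k : ℕ)) *ᵥ c)) := by
  set f := Φ.charpoly with hf
  set g : ℝ[X] := (X - C 1) * f with hg
  have hcard : Fintype.card (Fin n ⊕ Fin q) = n + q := by simp
  have hfdeg : f.natDegree = n + q := by
    rw [hf, Matrix.charpoly_natDegree_eq_dim, hcard]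
  have hfne : f ≠ 0 := Φ.charpoly_monic.ne_zero
  have hgne : g ≠ 0 := mul_ne_zero (X_sub_C_ne_zero 1) hfne
  have hgdeg : g.natDegree = n + q + 1 := by
    rw [hg, natDegree_mul (X_sub_C_ne_zero 1) hfne, natDegree_X_sub_C, hfdeg]
    ring
  -- annihilation
  have hann : aeval T g = 0 := by
    obtain ⟨B, hB⟩ := aeval_fromBlocks (1 : Matrix (Fin p) (Fin p) ℝ) Ψ Φ f
    rw [hg]
    rw [map_mul (Polynomial.aeval (R := ℝ) T)]
    rw [hT]
    rw [hB]
    rw [Matrix.aeval_self_charpoly]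
    have h1 : aeval (R := ℝ) (fromBlocks (1 : Matrix (Fin p) (Fin p) ℝ) Ψ 0 Φ) (X - C 1)
        = fromBlocks 0 Ψ 0 (Φ - 1) := by
      simp [Algebra.algebraMap_eq_smul_one, Matrix.fromBlocks_one]
      rw [← Matrix.fromBlocks_one]
      ext i j
      rcases i with i | i <;> rcases j with j | j <;>
        simp [Matrix.fromBlocks, Matrix.sub_apply]
    rw [h1, Matrix.fromBlocks_multiply]
    simp
  constructor
  · calc (minpoly ℝ T).natDegree ≤ g.natDegree :=
          Polynomial.natDegree_le_of_dvd (minpoly.dvd ℝ T hann) hgne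
      _ = n + q + 1 := hgdeg
  · intro hdet c
    -- det Φ ≠ 0
    have hdetT : T.det = Φ.det := by
      rw [hT, Matrix.det_fromBlocks_zero₂₁]; simp
    have hΦdet : Φ.det ≠ 0 := by
      rw [hdetT] at hdet
      exact hdet.ne_zero
    -- constant coefficient of g
    have hb : g.coeff 0 = -(f.coeff 0) := by
      rw [hg, Polynomial.mul_coeff_zero]
      simp
    have hf0 : f.coeff 0 ≠ 0 := by
      intro h0
      apply hΦdet
      rw [Matrix.det_eq_sign_charpoly_coeff, ← hf, h0, mul_zero]
    set b : ℝ := f.coeff 0 with hbdef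
    set s : ℝ[X] := g.divX with hs
    have hsdeg : s.natDegree ≤ n + q := by
      rw [hs, Polynomial.natDegree_divX_eq_natDegree_tsub_one, hgdeg]; omega
    -- aeval T s * T = b • 1
    have key : aeval T s * T = b • 1 := by
      have := Polynomial.divX_mul_X_add g
      have h2 : aeval T (s * X + C (g.coeff 0)) = 0 := by rw [this]; exact hann
      rw [map_add, map_mul (Polynomial.aeval (R := ℝ) T), aeval_X, aeval_C, Algebra.algebraMap_eq_smul_one, hb] at h2
      have := eq_neg_of_add_eq_zero_left h2
      rw [this, neg_smul, neg_neg]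
    have hTinv : T⁻¹ = b⁻¹ • aeval T s := by
      apply Matrix.inv_eq_left_inv
      rw [Matrix.smul_mul, key, smul_smul, inv_mul_cancel₀ hf0, one_smul]
    rw [hTinv, Matrix.smul_mulVec]
    apply Submodule.smul_mem
    rw [Polynomial.aeval_eq_sum_range' (lt_of_le_of_lt hsdeg (Nat.lt_succ_self _)) T,
      my_sum_mulVec]
    apply Submodule.sum_mem
    intro i hi
    rw [Matrix.smul_mulVec]
    apply Submodule.smul_mem
    apply Submodule.subset_span
    exact ⟨⟨i, Finset.mem_range.mp hi⟩, rfl⟩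
end

section
/- Let P̂ ≻ 0 be symmetric positive definite, P symmetric with P - A₂ᵀA₂ ≻ 0, and assume P̂ - P is positive semidefinite. If μ ≠ 1 is an eigenvalue of the preconditioned matrix ℳ₂⁻¹𝒜 with eigenvector (x; y; z), then μ is an eigenvalue of P̂⁻¹(P - A₂ᵀA₂), x = (μ-1)⁻¹A₁y, z = (μ-1)⁻¹A₂y with y ≠ 0, and μ ∈ (0, 2). -/
open Matrix

/-- If `μ ≠ 1` is an eigenvalue of `ℳ₂⁻¹𝒜` with eigenvector `(x; y; z)`, then `y ≠ 0`
is an eigenvector of `P̂⁻¹(P - A₂ᵀA₂)` for `μ`, `x = (μ-1)⁻¹A₁y`, `z = (μ-1)⁻¹A₂y`,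
and `μ ∈ (0, 2)`. -/
theorem stmt_15 {p n q : ℕ} (A₁ : Matrix (Fin p) (Fin n) ℝ)
    (A₂ : Matrix (Fin q) (Fin n) ℝ) (Phat : Matrix (Fin n) (Fin n) ℝ)
    (hA₁ : A₁.rank = n) (hPhat : Phat.PosDef)
    (hPA : (A₁ᵀ * A₁ - A₂ᵀ * A₂).PosDef)
    (hsemi : (Phat - A₁ᵀ * A₁).PosSemidef)
    (𝒜 ℳ₂ : Matrix (Fin p ⊕ (Fin n ⊕ Fin q)) (Fin p ⊕ (Fin n ⊕ Fin q)) ℝ)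
    (h𝒜 : 𝒜 = fromBlocks 1 (fromCols A₁ 0) 0 (fromBlocks (A₁ᵀ * A₁) A₂ᵀ A₂ 1))
    (hℳ : ℳ₂ = fromBlocks 1 0 0 (fromBlocks Phat A₂ᵀ 0 1))
    (μ : ℝ) (hμ : μ ≠ 1) (x : Fin p → ℝ) (y : Fin n → ℝ) (z : Fin q → ℝ)
    (hν : Sum.elim x (Sum.elim y z) ≠ 0)
    (heig : (ℳ₂⁻¹ * 𝒜) *ᵥ Sum.elim x (Sum.elim y z) = μ • Sum.elim x (Sum.elim y z)) :
    y ≠ 0 ∧ (Phat⁻¹ * (A₁ᵀ * A₁ - A₂ᵀ * A₂)) *ᵥ y = μ • y ∧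
      x = (μ - 1)⁻¹ • (A₁ *ᵥ y) ∧ z = (μ - 1)⁻¹ • (A₂ *ᵥ y) ∧
      0 < μ ∧ μ < 2 := by
  have hμ1 : μ - 1 ≠ 0 := sub_ne_zero.mpr hμ
  have hdetM : IsUnit ℳ₂.det := by
    rw [hℳ, det_fromBlocks_zero₂₁, det_fromBlocks_zero₂₁, det_one, det_one,
      one_mul, mul_one]
    exact hPhat.det_pos.ne'.isUnit
  -- transform the eigenvalue equation
  have heq : 𝒜 *ᵥ Sum.elim x (Sum.elim y z) = μ • (ℳ₂ *ᵥ Sum.elim x (Sum.elim y z)) := by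
    have := congrArg (fun w => ℳ₂ *ᵥ w) heig
    simpa [mulVec_mulVec, Matrix.mul_nonsing_inv_cancel_left _ _ hdetM,
      mulVec_smul] using this
  rw [h𝒜, hℳ] at heq
  simp only [fromBlocks_mulVec, fromCols_mulVec_sumElim, one_mulVec, zero_mulVec,
    add_zero, zero_add, zero_mul] at heq
  have e1 : x + A₁ *ᵥ y = μ • x := by
    funext i
    have := congrFun heq (Sum.inl i)
    simpa using this
  have e2 : (A₁ᵀ * A₁) *ᵥ y + A₂ᵀ *ᵥ z = μ • (Phat *ᵥ y + A₂ᵀ *ᵥ z) := by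
    funext i
    have := congrFun heq (Sum.inr (Sum.inl i))
    simpa using this
  have e3 : A₂ *ᵥ y + z = μ • z := by
    funext i
    have := congrFun heq (Sum.inr (Sum.inr i))
    simpa using this
  have hx' : (μ - 1) • x = A₁ *ᵥ y := by
    have : μ • x - x = A₁ *ᵥ y := by
      rw [← e1]; abel
    rw [sub_smul, one_smul, this]
  have hz' : (μ - 1) • z = A₂ *ᵥ y := by
    have : μ • z - z = A₂ *ᵥ y := by
      rw [← e3]; abel
    rw [sub_smul, one_smul, this]
  have hx : x = (μ - 1)⁻¹ • (A₁ *ᵥ y) := by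
    rw [← hx', smul_smul, inv_mul_cancel₀ hμ1, one_smul]
  have hz : z = (μ - 1)⁻¹ • (A₂ *ᵥ y) := by
    rw [← hz', smul_smul, inv_mul_cancel₀ hμ1, one_smul]
  -- the key equation for y
  have hAz : (A₂ᵀ * A₂) *ᵥ y = (μ - 1) • (A₂ᵀ *ᵥ z) := by
    rw [← mulVec_smul, hz', mulVec_mulVec]
  have hyeq : (A₁ᵀ * A₁ - A₂ᵀ * A₂) *ᵥ y = μ • (Phat *ᵥ y) := by
    rw [sub_mulVec, hAz]
    have := e2
    rw [smul_add] at this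
    have h2 : (A₁ᵀ * A₁) *ᵥ y = μ • (Phat *ᵥ y) + μ • (A₂ᵀ *ᵥ z) - A₂ᵀ *ᵥ z := by
      rw [← this]; abel
    rw [h2, sub_smul, one_smul]
    abel
  -- y ≠ 0
  have hy0 : y ≠ 0 := by
    intro h0
    apply hν
    have hx0 : x = 0 := by simp [hx, h0]
    have hz0 : z = 0 := by simp [hz, h0]
    rw [hx0, h0, hz0]
    ext (i | j | k) <;> simp
  refine ⟨hy0, ?_, hx, hz, ?_, ?_⟩
  · rw [← mulVec_mulVec, hyeq, mulVec_smul, mulVec_mulVec,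
      Matrix.nonsing_inv_mul _ hPhat.det_pos.ne'.isUnit, one_mulVec]
  -- positivity facts
  all_goals {
    have hs : 0 < y ⬝ᵥ (Phat *ᵥ y) := by
      have := hPhat.dotProduct_mulVec_pos hy0
      simpa using this
    have hdot : y ⬝ᵥ ((A₁ᵀ * A₁ - A₂ᵀ * A₂) *ᵥ y) = μ * (y ⬝ᵥ (Phat *ᵥ y)) := by
      rw [hyeq, dotProduct_smul, smul_eq_mul]
    have hpos : 0 < y ⬝ᵥ ((A₁ᵀ * A₁ - A₂ᵀ * A₂) *ᵥ y) := by
      have := hPA.dotProduct_mulVec_pos hy0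
      simpa using this
    have hμpos : 0 < μ := by
      have := hdot ▸ hpos
      exact (mul_pos_iff.mp this).elim (fun h => h.1)
        (fun h => absurd hs (not_lt.mpr h.2.le))
    first
    | exact hμpos
    | { -- μ < 2 : show μ ≤ 1
        have hsem : 0 ≤ y ⬝ᵥ ((Phat - A₁ᵀ * A₁) *ᵥ y) := by
          have := hsemi.dotProduct_mulVec_nonneg y
          simpa using this
        have hA2 : 0 ≤ y ⬝ᵥ ((A₂ᵀ * A₂) *ᵥ y) := by
          rw [← mulVec_mulVec, dotProduct_mulVec, vecMul_transpose]
          exact Fintype.sum_nonneg fun i => mul_self_nonneg _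
        have hle : y ⬝ᵥ ((A₁ᵀ * A₁ - A₂ᵀ * A₂) *ᵥ y) ≤ y ⬝ᵥ (Phat *ᵥ y) := by
          have expand : y ⬝ᵥ ((A₁ᵀ * A₁ - A₂ᵀ * A₂) *ᵥ y)
              = y ⬝ᵥ (Phat *ᵥ y) - y ⬝ᵥ ((Phat - A₁ᵀ * A₁) *ᵥ y)
                - y ⬝ᵥ ((A₂ᵀ * A₂) *ᵥ y) := by
            simp only [sub_mulVec, dotProduct_sub]
            ring
          rw [expand]; linarith
        have : μ * (y ⬝ᵥ (Phat *ᵥ y)) ≤ 1 * (y ⬝ᵥ (Phat *ᵥ y)) := by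
          rw [one_mul, ← hdot]; exact hle
        have hμle : μ ≤ 1 := le_of_mul_le_mul_right this hs
        linarith }
  }
end
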